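/- Let K be the closed unit disc in ℂ, let Φ : ℂ → ℂ be entire with Taylor expansion Φ(z) = ∑_{k=0}^∞ c_k z^k at 0, and let a, b ∈ K satisfy c₂ a² ≠ c₁ b². Define P : C(K) → ℂ by P(x) = x(a) + x(b)². Then P is orthogonally additive, but there is no complex Borel measure μ on K such that P(x) = ∫_K Φ(x(t)) dμ(t) for all x ∈ C(K). -/
import Mathlib


open MeasureTheory Filter Topology FormalMultilinearSeries

/-- The closed unit disc in `ℂ`, as a compact Hausdorff space. -/
abbrev DiscK : Type := ↥(Metric.closedBall (0 : ℂ) 1)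

instance : CompactSpace DiscK := isCompact_iff_compactSpace.mp (isCompact_closedBall 0 1)

/-- `P` is orthogonally additive when it is additive on orthogonal pairs. -/
def IsOrthAdd (P : C(DiscK, ℂ) → ℂ) : Prop :=
  ∀ x y : C(DiscK, ℂ), x * y = 0 → P (x + y) = P x + P y

lemma myOfScalars_coeff (d : ℕ → ℂ) (n : ℕ) : (ofScalars ℂ d).coeff n = d n := by
  show (ofScalars ℂ d) n (fun _ => (1:ℂ)) = d n
  rw [ofScalars_apply_eq]
  simp

/-- Uniqueness of power series coefficients (given norm-summability at radius 1). -/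
lemma coeff_unique {d e : ℕ → ℂ} {f : ℂ → ℂ}
    (hdsum : Summable fun k => ‖d k‖) (hesum : Summable fun k => ‖e k‖)
    (hd : ∀ s : ℂ, HasSum (fun k => d k * s ^ k) (f s))
    (he : ∀ s : ℂ, HasSum (fun k => e k * s ^ k) (f s)) : d = e := by
  have key : ∀ (d : ℕ → ℂ), (Summable fun k => ‖d k‖) →
      (∀ s : ℂ, HasSum (fun k => d k * s ^ k) (f s)) →
      HasFPowerSeriesAt f (ofScalars ℂ d) 0 := by
    intro d hdsum hd
    refine ⟨1, ?_, one_pos, ?_⟩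
    · apply le_radius_of_summable
      simpa [ofScalars_norm, myOfScalars_coeff] using hdsum
    · intro y _
      have := hd y
      simpa [myOfScalars_coeff, mul_comm] using this
  have := (key d hdsum hd).eq_formalMultilinearSeries (key e hesum he)
  exact (ofScalars_series_eq_iff ℂ d e).mp this

/-- An everywhere-convergent power series has absolutely summable coefficients
against any geometric weight. -/
lemma entire_summable {Φ : ℂ → ℂ} {c : ℕ → ℂ}
    (hc : ∀ z : ℂ, HasSum (fun k : ℕ => c k * z ^ k) (Φ z)) (r : ℝ) (hr : 0 ≤ r) :
    Summable fun k => ‖c k‖ * r ^ k := by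
  set R : ℝ := r + 1 with hR
  have hRpos : 0 < R := by positivity
  have hsum := (hc ((2 * R : ℝ) : ℂ)).summable
  have htend := hsum.tendsto_atTop_zero
  have hbdd : BddAbove (Set.range fun k => ‖c k * ((2 * R : ℝ) : ℂ) ^ k‖) :=
    (htend.norm.bddAbove_range)
  obtain ⟨C, hC⟩ := hbdd
  have hCb : ∀ k, ‖c k‖ * (2 * R) ^ k ≤ C := by
    intro k
    have := hC (Set.mem_range_self (f := fun k => ‖c k * ((2 * R : ℝ) : ℂ) ^ k‖) k)
    simpa [norm_mul, norm_pow, abs_of_pos hRpos] using this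
  have hgeom : Summable fun k : ℕ => C * (2⁻¹ : ℝ) ^ k :=
    (summable_geometric_of_lt_one (by norm_num) (by norm_num)).mul_left C
  refine Summable.of_nonneg_of_le (fun k => by positivity) (fun k => ?_) hgeom
  have h1 : ‖c k‖ * r ^ k ≤ ‖c k‖ * (2 * R)^k * (2⁻¹)^k := by
    rw [mul_assoc, ← mul_pow]
    have h2 : r ≤ 2 * R * 2⁻¹ := by rw [hR]; linarith
    exact mul_le_mul_of_nonneg_left (pow_le_pow_left₀ hr h2 k) (norm_nonneg _)
  calc ‖c k‖ * r ^ k ≤ ‖c k‖ * (2 * R)^k * (2⁻¹)^k := h1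
    _ ≤ C * (2⁻¹)^k := by
        have : (0:ℝ) ≤ (2⁻¹:ℝ)^k := by positivity
        exact mul_le_mul_of_nonneg_right (hCb k) this

/-- Interchange of power series summation and integration over a finite measure. -/
lemma key_hasSum {Φ : ℂ → ℂ} {c : ℕ → ℂ}
    (hc : ∀ z : ℂ, HasSum (fun k : ℕ => c k * z ^ k) (Φ z))
    (μ : Measure DiscK) [IsFiniteMeasure μ]
    (w : DiscK → ℂ) (hwm : Measurable w) (hw1 : ∀ t, ‖w t‖ = 1)
    (g : DiscK → ℂ) (hgc : Continuous g) (hgb : ∀ t, ‖g t‖ ≤ 1) (s : ℂ) :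
    HasSum (fun k => (c k * ∫ t, (g t) ^ k * w t ∂μ) * s ^ k)
      (∫ t, Φ (s * g t) * w t ∂μ) := by
  set F : ℕ → DiscK → ℂ := fun k t => (c k * s ^ k) * ((g t) ^ k * w t) with hF
  have hmeas : ∀ k, AEStronglyMeasurable (F k) μ := by
    intro k
    exact (((hgc.measurable.pow_const k).mul hwm).const_mul _).aestronglyMeasurable
  have hbound : ∀ k t, ‖F k t‖ ≤ ‖c k‖ * ‖s‖ ^ k := by
    intro k t
    have : ‖F k t‖ = ‖c k‖ * ‖s‖ ^ k * (‖g t‖ ^ k * ‖w t‖) := by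
      simp only [hF, norm_mul, norm_pow]
    rw [this, hw1 t, mul_one]
    have hg : ‖g t‖ ^ k ≤ 1 := pow_le_one₀ (norm_nonneg _) (hgb t)
    calc ‖c k‖ * ‖s‖ ^ k * ‖g t‖ ^ k ≤ ‖c k‖ * ‖s‖ ^ k * 1 := by
          exact mul_le_mul_of_nonneg_left hg (by positivity)
      _ = ‖c k‖ * ‖s‖ ^ k := mul_one _
  have hint : ∀ k, Integrable (F k) μ := by
    intro k
    exact Integrable.mono' (integrable_const (‖c k‖ * ‖s‖ ^ k)) (hmeas k)
      (ae_of_all _ fun t => hbound k t)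
  have hnormsum : Summable fun k => ∫ t, ‖F k t‖ ∂μ := by
    have hbig : Summable fun k => (‖c k‖ * ‖s‖ ^ k) * (μ Set.univ).toReal :=
      (entire_summable hc ‖s‖ (norm_nonneg s)).mul_right _
    refine Summable.of_nonneg_of_le (fun k => integral_nonneg fun t => norm_nonneg _)
      (fun k => ?_) hbig
    calc (∫ t, ‖F k t‖ ∂μ) ≤ ∫ _, ‖c k‖ * ‖s‖ ^ k ∂μ :=
          integral_mono (hint k).norm (integrable_const _) (fun t => hbound k t)
      _ = (μ Set.univ).toReal • (‖c k‖ * ‖s‖ ^ k) := integral_const _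
      _ = (‖c k‖ * ‖s‖ ^ k) * (μ Set.univ).toReal := by
          rw [smul_eq_mul]; ring
  have main := hasSum_integral_of_summable_integral_norm hint hnormsum
  have hpt : ∀ t, (∑' k, F k t) = Φ (s * g t) * w t := by
    intro t
    have h := (hc (s * g t)).mul_right (w t)
    have heq : (fun k => c k * (s * g t) ^ k * w t) = fun k => F k t := by
      funext k
      simp only [hF, mul_pow]
      ring
    rw [heq] at h
    exact h.tsum_eq
  have hval : (∫ t, ∑' k, F k t ∂μ) = ∫ t, Φ (s * g t) * w t ∂μ := by
    congr 1
    funext t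
    exact hpt t
  rw [hval] at main
  have hterm : (fun k => ∫ t, F k t ∂μ) =
      fun k => (c k * ∫ t, (g t) ^ k * w t ∂μ) * s ^ k := by
    funext k
    rw [hF]
    simp only []
    rw [integral_const_mul]
    ring
  rwa [hterm] at main

/-- Let `Φ` be entire with Taylor expansion `Φ z = ∑ₖ cₖ zᵏ` at `0`, and let
`a, b` be points of the closed unit disc `K` with `c₂ a² ≠ c₁ b²`.  Then
`P x = x(a) + x(b)²` is orthogonally additive, but there is no complex Borel
measure `μ` on `K` (encoded in polar form `w · μ` with `μ` finite positive and
`w` unimodular) such that `P x = ∫_K Φ(x(t)) dμ(t)` for all `x ∈ C(K)`. -/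
theorem no_factorization_for_degree_two_example
    (Φ : ℂ → ℂ) (hΦ : Differentiable ℂ Φ) (c : ℕ → ℂ)
    (hc : ∀ z : ℂ, HasSum (fun k : ℕ => c k * z ^ k) (Φ z))
    (a b : DiscK) (hab : c 2 * (a : ℂ) ^ 2 ≠ c 1 * (b : ℂ) ^ 2)
    (P : C(DiscK, ℂ) → ℂ) (hPdef : ∀ x : C(DiscK, ℂ), P x = x a + (x b) ^ 2) :
    IsOrthAdd P ∧
      ¬ ∃ (μ : Measure DiscK) (w : DiscK → ℂ),
          IsFiniteMeasure μ ∧ Measurable w ∧ (∀ t, ‖w t‖ = 1) ∧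
          ∀ x : C(DiscK, ℂ), P x = ∫ t, Φ (x t) * w t ∂μ := by
  constructor
  · -- orthogonal additivity
    intro x y hxy
    have hb : x b * y b = 0 := by
      have := ContinuousMap.congr_fun hxy b
      simpa using this
    rw [hPdef, hPdef, hPdef]
    simp only [ContinuousMap.add_apply]
    linear_combination (2 : ℂ) * hb
  · rintro ⟨μ, w, hfin, hwm, hw1, hrep⟩
    haveI := hfin
    set X : C(DiscK, ℂ) := ⟨fun t => (t : ℂ), continuous_subtype_val⟩ with hX
    set X2 : C(DiscK, ℂ) := ⟨fun t => (t : ℂ) ^ 2, by continuity⟩ with hX2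
    have hXb : ∀ t : DiscK, ‖(t : ℂ)‖ ≤ 1 := fun t => by
      simpa using mem_closedBall_zero_iff.mp t.2
    have hX2b : ∀ t : DiscK, ‖(t : ℂ) ^ 2‖ ≤ 1 := fun t => by
      rw [norm_pow]; exact pow_le_one₀ (norm_nonneg _) (hXb t)
    -- coefficient sequences
    set d1 : ℕ → ℂ := fun k => c k * ∫ t : DiscK, (t : ℂ) ^ k * w t ∂μ with hd1
    set d2 : ℕ → ℂ := fun k => c k * ∫ t : DiscK, ((t : ℂ) ^ 2) ^ k * w t ∂μ with hd2
    set e1 : ℕ → ℂ := fun k => if k = 1 then (a : ℂ) else if k = 2 then (b : ℂ) ^ 2 else 0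
      with he1
    set e2 : ℕ → ℂ := fun k => if k = 1 then (a : ℂ) ^ 2 else if k = 2 then (b : ℂ) ^ 4 else 0
      with he2
    -- power series identities
    have hval1 : ∀ s : ℂ, (∫ t : DiscK, Φ (s * (t : ℂ)) * w t ∂μ)
        = (a : ℂ) * s + (b : ℂ) ^ 2 * s ^ 2 := by
      intro s
      have h := hrep (s • X)
      rw [hPdef] at h
      simp only [hX, ContinuousMap.smul_apply, ContinuousMap.coe_mk, smul_eq_mul] at h
      rw [← h]; ring
    have hval2 : ∀ s : ℂ, (∫ t : DiscK, Φ (s * (t : ℂ) ^ 2) * w t ∂μ)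
        = (a : ℂ) ^ 2 * s + (b : ℂ) ^ 4 * s ^ 2 := by
      intro s
      have h := hrep (s • X2)
      rw [hPdef] at h
      simp only [hX2, ContinuousMap.smul_apply, ContinuousMap.coe_mk, smul_eq_mul] at h
      rw [← h]; ring
    have hsum1 : ∀ s : ℂ, HasSum (fun k => d1 k * s ^ k)
        ((a : ℂ) * s + (b : ℂ) ^ 2 * s ^ 2) := by
      intro s
      have := key_hasSum hc μ w hwm hw1 (fun t => (t : ℂ)) continuous_subtype_val hXb s
      rwa [hval1 s] at this
    have hsum2 : ∀ s : ℂ, HasSum (fun k => d2 k * s ^ k)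
        ((a : ℂ) ^ 2 * s + (b : ℂ) ^ 4 * s ^ 2) := by
      intro s
      have := key_hasSum hc μ w hwm hw1 (fun t => (t : ℂ) ^ 2)
        (by continuity) hX2b s
      rwa [hval2 s] at this
    have hesum1 : ∀ s : ℂ, HasSum (fun k => e1 k * s ^ k)
        ((a : ℂ) * s + (b : ℂ) ^ 2 * s ^ 2) := by
      intro s
      have ha : HasSum (fun k : ℕ => if k = 1 then (a : ℂ) * s else 0) ((a : ℂ) * s) :=
        hasSum_ite_eq 1 _
      have hbb : HasSum (fun k : ℕ => if k = 2 then (b : ℂ) ^ 2 * s ^ 2 else 0)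
          ((b : ℂ) ^ 2 * s ^ 2) := hasSum_ite_eq 2 _
      have h := ha.add hbb
      have heq : (fun k : ℕ => (if k = 1 then (a : ℂ) * s else 0)
          + (if k = 2 then (b : ℂ) ^ 2 * s ^ 2 else 0)) = fun k => e1 k * s ^ k := by
        funext k
        rcases k with _ | _ | _ | k <;> simp [he1] <;> ring
      rwa [heq] at h
    have hesum2 : ∀ s : ℂ, HasSum (fun k => e2 k * s ^ k)
        ((a : ℂ) ^ 2 * s + (b : ℂ) ^ 4 * s ^ 2) := by
      intro s
      have ha : HasSum (fun k : ℕ => if k = 1 then (a : ℂ) ^ 2 * s else 0) ((a : ℂ) ^ 2 * s) :=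
        hasSum_ite_eq 1 _
      have hbb : HasSum (fun k : ℕ => if k = 2 then (b : ℂ) ^ 4 * s ^ 2 else 0)
          ((b : ℂ) ^ 4 * s ^ 2) := hasSum_ite_eq 2 _
      have h := ha.add hbb
      have heq : (fun k : ℕ => (if k = 1 then (a : ℂ) ^ 2 * s else 0)
          + (if k = 2 then (b : ℂ) ^ 4 * s ^ 2 else 0)) = fun k => e2 k * s ^ k := by
        funext k
        rcases k with _ | _ | _ | k <;> simp [he2] <;> ring
      rwa [heq] at h
    -- summability of the coefficients
    have hdsum : ∀ (g : DiscK → ℂ), (∀ t, ‖g t‖ ≤ 1) →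
        Summable fun k => ‖c k * ∫ t : DiscK, (g t) ^ k * w t ∂μ‖ := by
      intro g hgb
      have hbig : Summable fun k => (‖c k‖ * (1 : ℝ) ^ k) * (μ Set.univ).toReal :=
        (entire_summable hc 1 zero_le_one).mul_right _
      refine Summable.of_nonneg_of_le (fun k => norm_nonneg _) (fun k => ?_) hbig
      rw [norm_mul]
      have hI : ‖∫ t : DiscK, (g t) ^ k * w t ∂μ‖ ≤ 1 * (μ Set.univ).toReal := by
        refine norm_integral_le_of_norm_le_const (ae_of_all _ fun t => ?_)
        rw [norm_mul, norm_pow, hw1 t, mul_one]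
        exact pow_le_one₀ (norm_nonneg _) (hgb t)
      calc ‖c k‖ * ‖∫ t : DiscK, (g t) ^ k * w t ∂μ‖
          ≤ ‖c k‖ * (1 * (μ Set.univ).toReal) :=
            mul_le_mul_of_nonneg_left hI (norm_nonneg _)
        _ = (‖c k‖ * (1 : ℝ) ^ k) * (μ Set.univ).toReal := by
            rw [one_pow]; ring
    have hd1sum : Summable fun k => ‖d1 k‖ := hdsum (fun t => (t : ℂ)) hXb
    have hd2sum : Summable fun k => ‖d2 k‖ := hdsum (fun t => (t : ℂ) ^ 2) hX2b
    have he1sum : Summable fun k => ‖e1 k‖ := by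
      apply summable_of_ne_finset_zero (s := {1, 2})
      intro k hk
      simp only [Finset.mem_insert, Finset.mem_singleton] at hk
      push_neg at hk
      simp [he1, hk.1, hk.2]
    have he2sum : Summable fun k => ‖e2 k‖ := by
      apply summable_of_ne_finset_zero (s := {1, 2})
      intro k hk
      simp only [Finset.mem_insert, Finset.mem_singleton] at hk
      push_neg at hk
      simp [he2, hk.1, hk.2]
    -- uniqueness of coefficients
    have hu1 : d1 = e1 := coeff_unique hd1sum he1sum hsum1 hesum1
    have hu2 : d2 = e2 := coeff_unique hd2sum he2sum hsum2 hesum2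
    have hA2 : c 2 * (∫ t : DiscK, (t : ℂ) ^ 2 * w t ∂μ) = (b : ℂ) ^ 2 := by
      have := congrFun hu1 2
      simpa [hd1, he1] using this
    have hB1 : c 1 * (∫ t : DiscK, (t : ℂ) ^ 2 * w t ∂μ) = (a : ℂ) ^ 2 := by
      have := congrFun hu2 1
      simpa [hd2, he2, pow_one] using this
    exact hab (by linear_combination c 1 * hA2 - c 2 * hB1)
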